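/- Let (C^1, …, C^k) be an admissible family in ℝ^n. Then for every x ∈ ℝ^n the following are equivalent: (i) x ∈ ⋃_{i=1}^k C^i; (ii) there exist x^1, …, x^k ∈ ℝ^n and y ∈ {0,1}^k such that Σ_{i=1}^k y_i = 1, Σ_{i=1}^k x^i = x, and for every i ∈ {1,…,k}: if y_i = 1 then x^i ∈ C^i, and if y_i = 0 then x^i ∈ rec(C^i). (This is the validity of the extended MIP formulation (2), with the gauge inequalities γ_{C^i−b^i}(x^i − b^i y_i) ≤ y_i rewritten, for binary y, as the stated membership conditions.) -/

import Mathlib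

open Pointwise Set

noncomputable section

/-- The recession cone of a set. -/
def recCone {E : Type*} [AddCommGroup E] [Module ℝ E] (S : Set E) : Set E :=
  {d | ∀ x ∈ S, ∀ t : ℝ, 0 ≤ t → x + t • d ∈ S}

/-- An admissible family: each member is a nonempty closed convex set and all members share
the same recession cone. -/
def Admissible {n k : ℕ} (C : Fin k → Set (Fin n → ℝ)) : Prop :=
  (∀ i, (C i).Nonempty) ∧ (∀ i, IsClosed (C i)) ∧ (∀ i, Convex ℝ (C i)) ∧
    ∀ i j, recCone (C i) = recCone (C j)

lemma zero_mem_recCone {E : Type*} [AddCommGroup E] [Module ℝ E] (S : Set E) :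
    (0 : E) ∈ recCone S := by
  intro z hz t _
  simpa using hz

lemma add_mem_of_recCone {E : Type*} [AddCommGroup E] [Module ℝ E] {S : Set E}
    {z d : E} (hz : z ∈ S) (hd : d ∈ recCone S) : z + d ∈ S := by
  simpa using hd z hz 1 zero_le_one

/-- Validity of the extended MIP formulation (2). -/
theorem stmt0 {n k : ℕ} (C : Fin k → Set (Fin n → ℝ)) (hC : Admissible C)
    (x : Fin n → ℝ) :
    (x ∈ ⋃ i, C i) ↔
      ∃ (xs : Fin k → Fin n → ℝ) (y : Fin k → ℝ),
        (∀ i, y i = 0 ∨ y i = 1) ∧ (∑ i, y i = 1) ∧ (∑ i, xs i = x) ∧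
        (∀ i, (y i = 1 → xs i ∈ C i) ∧ (y i = 0 → xs i ∈ recCone (C i))) := by
  constructor
  · rintro hx
    simp only [Set.mem_iUnion] at hx
    obtain ⟨i₀, hx⟩ := hx
    refine ⟨fun i => if i = i₀ then x else 0, fun i => if i = i₀ then 1 else 0, ?_, ?_, ?_, ?_⟩
    · intro i; by_cases h : i = i₀ <;> simp [h]
    · simp
    · simp
    · intro i
      by_cases h : i = i₀
      · subst h
        simp only [if_pos rfl]
        exact ⟨fun _ => hx, fun h0 => absurd h0 one_ne_zero⟩
      · simp only [if_neg h]
        exact ⟨fun h1 => absurd h1 one_ne_zero.symm, fun _ => zero_mem_recCone _⟩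
  · rintro ⟨xs, y, hy01, hysum, hxsum, hmem⟩
    -- find i₀ with y i₀ = 1
    have : ∃ i₀, y i₀ = 1 := by
      by_contra h
      push_neg at h
      have : ∀ i, y i = 0 := fun i => (hy01 i).resolve_right (h i)
      simp [this] at hysum
    obtain ⟨i₀, hi₀⟩ := this
    have hy0 : ∀ i ≠ i₀, y i = 0 := by
      intro i hi
      by_contra h
      have hyi : y i = 1 := (hy01 i).resolve_left h
      have hle : (2 : ℝ) ≤ ∑ j, y j := by
        have : y i + y i₀ = 2 := by rw [hyi, hi₀]; norm_num
        calc (2:ℝ) = ∑ j ∈ {i, i₀}, y j := by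
              rw [Finset.sum_pair hi]; linarith
          _ ≤ ∑ j, y j := by
              apply Finset.sum_le_sum_of_subset_of_nonneg (Finset.subset_univ _)
              intro j _ _
              rcases hy01 j with h | h <;> simp [h]
      rw [hysum] at hle; linarith
    have hrec : ∀ i ∈ Finset.univ.erase i₀, xs i ∈ recCone (C i₀) := by
      intro i hi
      rw [Finset.mem_erase] at hi
      have := (hmem i).2 (hy0 i hi.1)
      rwa [hC.2.2.2 i i₀] at this
    have hmain : ∀ s : Finset (Fin k), (∀ i ∈ s, xs i ∈ recCone (C i₀)) →
        xs i₀ + ∑ i ∈ s, xs i ∈ C i₀ := by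
      intro s
      induction s using Finset.induction with
      | empty => intro _; simpa using (hmem i₀).1 hi₀
      | insert a s' hns ih =>
        intro hs
        rw [Finset.sum_insert hns]
        have : xs i₀ + (xs a + ∑ i ∈ s', xs i) = (xs i₀ + ∑ i ∈ s', xs i) + xs a := by ring
        rw [this]
        exact add_mem_of_recCone (ih fun i hi => hs i (Finset.mem_insert_of_mem hi))
          (hs a (Finset.mem_insert_self a s'))
    have hx : x = xs i₀ + ∑ i ∈ Finset.univ.erase i₀, xs i := by
      rw [← hxsum, Finset.add_sum_erase _ _ (Finset.mem_univ i₀)]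
    rw [Set.mem_iUnion]
    exact ⟨i₀, hx ▸ hmain _ hrec⟩
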